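/- arXiv:1711.03752 — 5 statements merged into one kernel-verified Lean document; each statement's English description precedes it below -/
import Mathlib

section
/- For nonempty closed subsets S, T of [0,1] with min S ≤ min T, the set S ∪_S T := (S ∩ [min T, max S]) ∪ T is an upper bound of both S and T with respect to ≤_S. -/
/-- The relation `≤_S`: `S ≤_S T` iff `max S ≤ max T`, `min S ≤ min T`
and `S ∩ [min T, max S] ⊆ T`. -/
noncomputable def leS (S T : Set ℝ) : Prop :=
  sSup S ≤ sSup T ∧ sInf S ≤ sInf T ∧ S ∩ Set.Icc (sInf T) (sSup S) ⊆ T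

theorem stmt_9 (S T : Set ℝ) (hSne : S.Nonempty) (hTne : T.Nonempty)
    (hS : S ⊆ Set.Icc 0 1) (hT : T ⊆ Set.Icc 0 1)
    (hSc : IsClosed S) (hTc : IsClosed T) (h : sInf S ≤ sInf T) :
    leS S ((S ∩ Set.Icc (sInf T) (sSup S)) ∪ T) ∧
    leS T ((S ∩ Set.Icc (sInf T) (sSup S)) ∪ T) := by
  set U := (S ∩ Set.Icc (sInf T) (sSup S)) ∪ T with hU
  have hTU : T ⊆ U := Set.subset_union_right
  have hUne : U.Nonempty := hTne.mono hTU
  have hSbdd : BddAbove S := ⟨1, fun x hx => (hS hx).2⟩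
  have hSbddB : BddBelow S := ⟨0, fun x hx => (hS hx).1⟩
  have hTbdd : BddAbove T := ⟨1, fun x hx => (hT hx).2⟩
  have hTbddB : BddBelow T := ⟨0, fun x hx => (hT hx).1⟩
  have hUbdd : BddAbove U := ⟨1, fun x hx => by
    rcases hx with hx | hx
    · exact (hS hx.1).2
    · exact (hT hx).2⟩
  have hUbddB : BddBelow U := ⟨0, fun x hx => by
    rcases hx with hx | hx
    · exact (hS hx.1).1
    · exact (hT hx).1⟩
  -- every element of U is ≥ sInf T
  have hlb : ∀ x ∈ U, sInf T ≤ x := fun x hx => by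
    rcases hx with hx | hx
    · exact hx.2.1
    · exact csInf_le hTbddB hx
  have hInfU : sInf U = sInf T :=
    le_antisymm (csInf_le_csInf hUbddB hTne hTU) (le_csInf hUne hlb)
  have hSupTU : sSup T ≤ sSup U := csSup_le_csSup hUbdd hTne hTU
  have hSupSU : sSup S ≤ sSup U := by
    rcases le_or_gt (sInf T) (sSup S) with hle | hlt
    · have hm : sSup S ∈ S := hSc.csSup_mem hSne hSbdd
      exact le_csSup hUbdd (Or.inl ⟨hm, hle, le_refl _⟩)
    · exact (hlt.le.trans (csInf_le_csSup hTne hTbddB hTbdd)).trans hSupTU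
  refine ⟨⟨hSupSU, h.trans_eq hInfU.symm, ?_⟩,
    ⟨hSupTU, hInfU.ge, fun x hx => hTU hx.1⟩⟩
  rw [hInfU]
  exact Set.subset_union_left
end

section
/- For nonempty closed subsets S, T of [0,1] with min S ≤ min T, the set S ∪_S T := (S ∩ [min T, max S]) ∪ T is the least upper bound of S and T with respect to ≤_S: any nonempty closed J with S ≤_S J and T ≤_S J satisfies (S ∪_S T) ≤_S J. -/
theorem stmt_10 (S T : Set ℝ) (hSne : S.Nonempty) (hTne : T.Nonempty)
    (hS : S ⊆ Set.Icc 0 1) (hT : T ⊆ Set.Icc 0 1)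
    (hSc : IsClosed S) (hTc : IsClosed T) (h : sInf S ≤ sInf T) :
    ∀ J : Set ℝ, J.Nonempty → J ⊆ Set.Icc 0 1 → IsClosed J →
      leS S J → leS T J → leS ((S ∩ Set.Icc (sInf T) (sSup S)) ∪ T) J := by
  intro J hJne hJ hJc hSJ hTJ
  have hSba : BddAbove S := BddAbove.mono hS (bddAbove_Icc)
  have hTba : BddAbove T := BddAbove.mono hT (bddAbove_Icc)
  have hTbb : BddBelow T := BddBelow.mono hT (bddBelow_Icc)
  have hUne : ((S ∩ Set.Icc (sInf T) (sSup S)) ∪ T).Nonempty :=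
    hTne.mono Set.subset_union_right
  refine ⟨?_, ?_, ?_⟩
  · apply csSup_le hUne
    rintro x (⟨hxS, -⟩ | hxT)
    · exact le_trans (le_trans (le_csSup hSba hxS) hSJ.1) le_rfl
    · exact le_trans (le_csSup hTba hxT) hTJ.1
  · have h1 : sInf ((S ∩ Set.Icc (sInf T) (sSup S)) ∪ T) ≤ sInf T := by
      apply csInf_le_csInf _ hTne Set.subset_union_right
      exact BddBelow.mono (Set.union_subset (fun x hx => hS hx.1) hT)
        (bddBelow_Icc)
    exact le_trans h1 hTJ.2.1
  · rintro x ⟨(⟨hxS, hx2⟩ | hxT), hxJ1, -⟩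
    · exact hSJ.2.2 ⟨hxS, hxJ1, le_csSup hSba hxS⟩
    · exact hTJ.2.2 ⟨hxT, hxJ1, le_csSup hTba hxT⟩
end

section
/- For nonempty closed subsets S, T of [0,1] with min S ≤ min T, the set S ∩_S T := S ∩ ([min S, min T] ∪ T) is a nonempty closed lower bound of both S and T with respect to ≤_S. -/
theorem stmt_11 (S T : Set ℝ) (hSne : S.Nonempty) (hTne : T.Nonempty)
    (hS : S ⊆ Set.Icc 0 1) (hT : T ⊆ Set.Icc 0 1)
    (hSc : IsClosed S) (hTc : IsClosed T) (h : sInf S ≤ sInf T) :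
    (S ∩ (Set.Icc (sInf S) (sInf T) ∪ T)).Nonempty ∧
    IsClosed (S ∩ (Set.Icc (sInf S) (sInf T) ∪ T)) ∧
    leS (S ∩ (Set.Icc (sInf S) (sInf T) ∪ T)) S ∧
    leS (S ∩ (Set.Icc (sInf S) (sInf T) ∪ T)) T := by
  have hScomp : IsCompact S := isCompact_Icc.of_isClosed_subset hSc hS
  have hTcomp : IsCompact T := isCompact_Icc.of_isClosed_subset hTc hT
  have hSbb : BddBelow S := hScomp.bddBelow
  have hSba : BddAbove S := hScomp.bddAbove
  have hTba : BddAbove T := hTcomp.bddAbove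
  have hinfS : sInf S ∈ S := hScomp.sInf_mem hSne
  have hinfT : sInf T ∈ T := hTcomp.sInf_mem hTne
  set M := S ∩ (Set.Icc (sInf S) (sInf T) ∪ T) with hM
  have hMsub : M ⊆ S := Set.inter_subset_left
  have hMne : M.Nonempty := ⟨sInf S, hinfS, Or.inl ⟨le_refl _, h⟩⟩
  have hMba : BddAbove M := hSba.mono hMsub
  have hMbb : BddBelow M := hSbb.mono hMsub
  have hsupMS : sSup M ≤ sSup S := csSup_le_csSup hSba hMne hMsub
  have hinfMS : sInf S ≤ sInf M := le_csInf hMne fun x hx => csInf_le hSbb (hMsub hx)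
  have hinfM : sInf M ≤ sInf S := csInf_le hMbb ⟨hinfS, Or.inl ⟨le_refl _, h⟩⟩
  refine ⟨hMne, hSc.inter ((isClosed_Icc).union hTc), ⟨hsupMS, hinfM, fun x hx => hx.1.1⟩, ?_⟩
  refine ⟨?_, hinfM.trans h, ?_⟩
  · refine csSup_le hMne fun x hx => ?_
    rcases hx.2 with hx' | hx'
    · exact hx'.2.trans (le_csSup hTba hinfT)
    · exact le_csSup hTba hx'
  · rintro x ⟨⟨hxS, hx2⟩, hxT, _⟩
    rcases hx2 with hx' | hx'
    · have : x = sInf T := le_antisymm hx'.2 hxT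
      exact this ▸ hinfT
    · exact hx'
end

section
/- For nonempty closed subsets S, T of [0,1] with min S ≤ min T, the set S ∩_S T := S ∩ ([min S, min T] ∪ T) is the greatest lower bound of S and T with respect to ≤_S: any nonempty closed J with J ≤_S S and J ≤_S T satisfies J ≤_S (S ∩_S T). -/
theorem stmt_12 (S T : Set ℝ) (hSne : S.Nonempty) (hTne : T.Nonempty)
    (hS : S ⊆ Set.Icc 0 1) (hT : T ⊆ Set.Icc 0 1)
    (hSc : IsClosed S) (hTc : IsClosed T) (h : sInf S ≤ sInf T) :
    ∀ J : Set ℝ, J.Nonempty → J ⊆ Set.Icc 0 1 → IsClosed J →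
      leS J S → leS J T → leS J (S ∩ (Set.Icc (sInf S) (sInf T) ∪ T)) := by
  intro J hJne hJ hJc hJS hJT
  obtain ⟨hJS1, hJS2, hJS3⟩ := hJS
  obtain ⟨hJT1, hJT2, hJT3⟩ := hJT
  have bddS : BddBelow S := bddBelow_Icc.mono hS
  have bddJa : BddBelow J := bddBelow_Icc.mono hJ
  have bddJb : BddAbove J := bddAbove_Icc.mono hJ
  set M : Set ℝ := S ∩ (Set.Icc (sInf S) (sInf T) ∪ T) with hM
  have hinfS_mem : sInf S ∈ S := hSc.csInf_mem hSne bddS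
  have hinfS_M : sInf S ∈ M := ⟨hinfS_mem, Or.inl ⟨le_refl _, h⟩⟩
  have hMne : M.Nonempty := ⟨sInf S, hinfS_M⟩
  have bddM : BddBelow M := bddS.mono Set.inter_subset_left
  have hinfM : sInf M = sInf S := by
    apply le_antisymm (csInf_le bddM hinfS_M)
    exact le_csInf hMne fun x hx => csInf_le bddS hx.1
  have hsupJ_mem : sSup J ∈ J := hJc.csSup_mem hJne bddJb
  have hinfJ_le : sInf J ≤ sSup J := csInf_le_csSup hJne bddJa bddJb
  refine ⟨?_, ?_, ?_⟩
  · -- sSup J ≤ sSup M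
    rcases le_or_gt (sInf S) (sSup J) with hc1 | hc1
    · have hsJ_S : sSup J ∈ S := hJS3 ⟨hsupJ_mem, hc1, le_refl _⟩
      rcases le_or_gt (sInf T) (sSup J) with hc2 | hc2
      · have hsJ_T : sSup J ∈ T := hJT3 ⟨hsupJ_mem, hc2, le_refl _⟩
        exact le_csSup (bddAbove_Icc.mono (fun x hx => hS hx.1)) ⟨hsJ_S, Or.inr hsJ_T⟩
      · exact le_csSup (bddAbove_Icc.mono (fun x hx => hS hx.1))
          ⟨hsJ_S, Or.inl ⟨hc1, hc2.le⟩⟩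
    · exact le_trans hc1.le (le_csSup (bddAbove_Icc.mono (fun x hx => hS hx.1)) hinfS_M)
  · rw [hinfM]; exact hJS2
  · -- subset condition
    rw [hinfM]
    rintro x ⟨hxJ, hx1, hx2⟩
    have hxS : x ∈ S := hJS3 ⟨hxJ, hx1, hx2⟩
    rcases le_or_gt (sInf T) x with hc | hc
    · exact ⟨hxS, Or.inr (hJT3 ⟨hxJ, hc, hx2⟩)⟩
    · exact ⟨hxS, Or.inl ⟨hx1, hc.le⟩⟩
end

section
/- The map δ preserves joins: for nonempty closed subsets C, D of [0,1], δ(C ∪_C D) = max(δ(C), δ(D)) pointwise, where C ∪_C D = (C ∩ [min D, max C]) ∪ D when min C ≤ min D (symmetric otherwise). -/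
open scoped Classical

/-- The map δ: `δ(C)(t) = min C` if `t ≤ min C`, `δ(C)(t) = t` if `t > min C`
and `t ∈ C`, and `δ(C)(t) = 0` otherwise. -/

noncomputable def delta (C : Set ℝ) : ℝ → ℝ :=
  fun t => if t ≤ sInf C then sInf C else if t ∈ C then t else 0

/-- The join `∪_C` on nonempty closed subsets of `[0,1]`. -/
noncomputable def cupC (S T : Set ℝ) : Set ℝ :=
  if sInf S ≤ sInf T then (S ∩ Set.Icc (sInf T) (sSup S)) ∪ T
  else (T ∩ Set.Icc (sInf S) (sSup T)) ∪ S

lemma key_delta (C D : Set ℝ) (hCne : C.Nonempty) (hDne : D.Nonempty)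
    (hC : C ⊆ Set.Icc 0 1) (hD : D ⊆ Set.Icc 0 1)
    (hCc : IsClosed C) (hDc : IsClosed D) (hle : sInf C ≤ sInf D) :
    delta ((C ∩ Set.Icc (sInf D) (sSup C)) ∪ D) =
      fun t => max (delta C t) (delta D t) := by
  have hCbb : BddBelow C := BddBelow.mono hC bddBelow_Icc
  have hDbb : BddBelow D := BddBelow.mono hD bddBelow_Icc
  have hCba : BddAbove C := BddAbove.mono hC bddAbove_Icc
  have haC : sInf C ∈ C := hCc.csInf_mem hCne hCbb
  have hbD : sInf D ∈ D := hDc.csInf_mem hDne hDbb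
  have ha0 : (0:ℝ) ≤ sInf C := (hC haC).1
  have hb0 : (0:ℝ) ≤ sInf D := (hD hbD).1
  set E : Set ℝ := (C ∩ Set.Icc (sInf D) (sSup C)) ∪ D with hE
  have hEsub : E ⊆ Set.Icc 0 1 := by
    rintro x (⟨hx, -⟩ | hx)
    · exact hC hx
    · exact hD hx
  have hEbb : BddBelow E := BddBelow.mono hEsub bddBelow_Icc
  have hEinf : sInf E = sInf D := by
    apply le_antisymm
    · exact csInf_le hEbb (Or.inr hbD)
    · apply le_csInf ⟨sInf D, Or.inr hbD⟩
      rintro x (⟨-, hx, -⟩ | hx)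
      · exact hx
      · exact csInf_le hDbb hx
  funext t
  simp only [delta, hEinf]
  by_cases htb : t ≤ sInf D
  · rw [if_pos htb, if_pos htb]
    by_cases hta : t ≤ sInf C
    · rw [if_pos hta, max_eq_right hle]
    · rw [if_neg hta]
      by_cases htC : t ∈ C
      · rw [if_pos htC, max_eq_right htb]
      · rw [if_neg htC, max_eq_right hb0]
  · have hta : ¬ t ≤ sInf C := fun h => htb (h.trans hle)
    rw [if_neg htb, if_neg htb, if_neg hta]
    have ht0 : (0:ℝ) < t := lt_of_le_of_lt hb0 (lt_of_not_ge htb)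
    by_cases htE : t ∈ E
    · rw [if_pos htE]
      rcases htE with ⟨htC, -⟩ | htD
      · rw [if_pos htC]
        by_cases htD : t ∈ D
        · rw [if_pos htD, max_self]
        · rw [if_neg htD, max_eq_left ht0.le]
      · rw [if_pos htD]
        by_cases htC : t ∈ C
        · rw [if_pos htC, max_self]
        · rw [if_neg htC, max_eq_right ht0.le]
    · rw [if_neg htE]
      have htD : t ∉ D := fun h => htE (Or.inr h)
      have htC : t ∉ C := by
        intro h
        exact htE (Or.inl ⟨h, (lt_of_not_ge htb).le, le_csSup hCba h⟩)
      rw [if_neg htC, if_neg htD, max_self]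

theorem stmt_16 (C D : Set ℝ) (hCne : C.Nonempty) (hDne : D.Nonempty)
    (hC : C ⊆ Set.Icc 0 1) (hD : D ⊆ Set.Icc 0 1)
    (hCc : IsClosed C) (hDc : IsClosed D) :
    delta (cupC C D) = fun t => max (delta C t) (delta D t) := by
  unfold cupC
  by_cases h : sInf C ≤ sInf D
  · rw [if_pos h]
    exact key_delta C D hCne hDne hC hD hCc hDc h
  · rw [if_neg h]
    rw [key_delta D C hDne hCne hD hC hDc hCc (le_of_not_ge h)]
    funext t
    exact max_comm _ _
end
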